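/- Let S = [[A, B], [C, D]] be a symplectic matrix. Then the orthogonal complement of the range of B is contained in the range of D: R(B)ᗮ ⊆ R(D). -/

import Mathlib

open Matrix

theorem symplectic_rangeB_perp_subset_rangeD {d : ℕ} (A B C D : Matrix (Fin d) (Fin d) ℝ)
    (hS : (fromBlocks A B C D)ᵀ * fromBlocks 0 1 (-1) 0 * fromBlocks A B C D
        = fromBlocks (0 : Matrix (Fin d) (Fin d) ℝ) 1 (-1) 0) :
    (LinearMap.range (Matrix.toEuclideanLin B))ᗮ
      ≤ LinearMap.range (Matrix.toEuclideanLin D) := by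
  set S := fromBlocks A B C D with hSdef
  set J := fromBlocks (0 : Matrix (Fin d) (Fin d) ℝ) (1 : Matrix (Fin d) (Fin d) ℝ)
      (-1 : Matrix (Fin d) (Fin d) ℝ) (0 : Matrix (Fin d) (Fin d) ℝ) with hJdef
  have hJJ : J * J = -1 := by
    rw [hJdef, fromBlocks_multiply, ← fromBlocks_one, fromBlocks_neg]
    norm_num
  have hleft : (-(J * Sᵀ * J)) * S = 1 := by
    rw [neg_mul, mul_assoc, mul_assoc, ← mul_assoc Sᵀ J S, hS, hJJ, neg_neg]
  have hright : S * (-(J * Sᵀ * J)) = 1 := mul_eq_one_comm.mp hleft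
  have hSJS : S * J * Sᵀ = J := by
    have h3 : S * (J * Sᵀ * J) = -1 := by
      rw [mul_neg] at hright
      exact neg_eq_iff_eq_neg.mp hright
    have h4 : S * J * Sᵀ * J = -1 := by
      rw [mul_assoc, mul_assoc, ← mul_assoc J Sᵀ J]
      exact h3
    have h5 := congrArg (· * J) h4
    simp only [mul_assoc (S * J * Sᵀ) J J, hJJ, mul_neg_one, neg_mul, one_mul] at h5
    exact neg_injective h5
  -- extract block (2,1): C * Bᵀ - D * Aᵀ = -1
  have hblock : C * Bᵀ - D * Aᵀ = -1 := by
    have h := congrArg Matrix.toBlocks₂₁ hSJS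
    simp [hSdef, hJdef, fromBlocks_transpose, fromBlocks_multiply] at h
    linear_combination (norm := noncomm_ring) h
  have key : D * Aᵀ - C * Bᵀ = 1 := by
    have h := congrArg Neg.neg hblock
    simpa [neg_sub] using h
  intro x hx
  set x' : Fin d → ℝ := (WithLp.equiv 2 (Fin d → ℝ)) x with hx'
  have hBx : Bᵀ *ᵥ x' = 0 := by
    have h0 : ∀ y : EuclideanSpace ℝ (Fin d), inner ℝ (Matrix.toEuclideanLin B y) x = (0 : ℝ) :=
      fun y => hx _ (LinearMap.mem_range_self _ y)
    have h1 : ∀ y : Fin d → ℝ, (B *ᵥ y) ⬝ᵥ x' = 0 := by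
      intro y
      have := h0 ((WithLp.equiv 2 (Fin d → ℝ)).symm y)
      simpa [WithLp.equiv_symm_apply, toEuclideanLin_apply_piLp_toLp, EuclideanSpace.inner_eq_star_dotProduct,
        dotProduct_comm, hx', WithLp.equiv_apply] using this
    have h2 : (Bᵀ *ᵥ x') ⬝ᵥ (Bᵀ *ᵥ x') = 0 := by
      have h := h1 (Bᵀ *ᵥ x')
      rw [dotProduct_comm, dotProduct_mulVec] at h
      rwa [← mulVec_transpose] at h
    exact dotProduct_self_eq_zero.mp h2
  refine ⟨(WithLp.equiv 2 (Fin d → ℝ)).symm (Aᵀ *ᵥ x'), ?_⟩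
  rw [WithLp.equiv_symm_apply, toEuclideanLin_apply_piLp_toLp]
  have hfinal : D *ᵥ (Aᵀ *ᵥ x') = x' := by
    have h := congrArg (fun M => M *ᵥ x') key
    simpa [sub_mulVec, ← mulVec_mulVec, hBx] using h
  rw [hfinal]
  exact (WithLp.equiv 2 (Fin d → ℝ)).symm_apply_apply x
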